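/- Let 𝒢 be a groupoid, ℛ a unital ring bundle over 𝒢⁽⁰⁾, and (M,τ) a factor system for (𝒢,ℛ). Then the set ℛ ×_(M,τ) 𝒢 of finitely supported functions f: 𝒢 → ℛ with p∘f = r, equipped with pointwise addition and the product (fg)(z) = Σ_{xy=z} f(x)M_x(g(y))τ(x,y), is an associative ring. -/
import Mathlib


/-- A groupoid over a unit space `U`, with a total (junk-valued outside composables)
multiplication. `e : U → G` is the inclusion of units. -/
structure Gpd (G U : Type) where
  s : G → U
  r : G → U
  e : U → G
  mul : G → G → G
  inv : G → G
  s_e : ∀ u, s (e u) = u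
  r_e : ∀ u, r (e u) = u
  e_mul : ∀ x, mul (e (r x)) x = x
  mul_e : ∀ x, mul x (e (s x)) = x
  s_inv : ∀ x, s (inv x) = r x
  r_inv : ∀ x, r (inv x) = s x
  inv_mul : ∀ x, mul (inv x) x = e (s x)
  mul_inv : ∀ x, mul x (inv x) = e (r x)
  r_mul : ∀ x y, s x = r y → r (mul x y) = r x
  s_mul : ∀ x y, s x = r y → s (mul x y) = s y
  assoc : ∀ x y z, s x = r y → s y = r z → mul (mul x y) z = mul x (mul y z)

/-- Transport along an equality of base points of a bundle of types. -/
def tr {U : Type} (Rf : U → Type) {u v : U} (h : u = v) (a : Rf u) : Rf v := h ▸ a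

/-- A factor system `(M,τ)` for `(𝒢,ℛ)`, where `ℛ` is the unital ring bundle with fibers
`Rf u`: `M_x : R_{s x} → R_{r x}` are ring isomorphisms which are trivial on units, and
`τ(x,y) ∈ R_{r x}ˣ` is normalized and satisfies the conditions (C1) and (C2). -/
structure RingFS {G U : Type} (𝒢 : Gpd G U) (Rf : U → Type) [∀ u, Ring (Rf u)] where
  M : (x : G) → Rf (𝒢.s x) → Rf (𝒢.r x)
  τ : (x y : G) → Rf (𝒢.r x)
  τinv : (x y : G) → Rf (𝒢.r x)
  M_add : ∀ x a b, M x (a + b) = M x a + M x b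
  M_mul : ∀ x a b, M x (a * b) = M x a * M x b
  M_one : ∀ x, M x 1 = 1
  M_bij : ∀ x, Function.Bijective (M x)
  M_e : ∀ u a, M (𝒢.e u) a = tr Rf ((𝒢.s_e u).trans (𝒢.r_e u).symm) a
  τ_mul_τinv : ∀ x y, 𝒢.s x = 𝒢.r y → τ x y * τinv x y = 1
  τinv_mul_τ : ∀ x y, 𝒢.s x = 𝒢.r y → τinv x y * τ x y = 1
  τ_e_left : ∀ x, τ (𝒢.e (𝒢.r x)) x = 1
  τ_e_right : ∀ x, τ x (𝒢.e (𝒢.s x)) = 1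
  C1 : ∀ x y (h : 𝒢.s x = 𝒢.r y) (n : Rf (𝒢.s y)),
    M x (tr Rf h.symm (M y n)) =
      τ x y * tr Rf (𝒢.r_mul x y h) (M (𝒢.mul x y) (tr Rf (𝒢.s_mul x y h).symm n)) * τinv x y
  C2 : ∀ x y z (hxy : 𝒢.s x = 𝒢.r y) (hyz : 𝒢.s y = 𝒢.r z),
    τ x y * tr Rf (𝒢.r_mul x y hxy) (τ (𝒢.mul x y) z) =
      M x (tr Rf hxy.symm (τ y z)) * τ x (𝒢.mul y z)

/-- The crossed-product multiplication on finitely supported sections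
`f : (x : G) → R_{r x}`: `(fg)(z) = ∑_{xy=z} f(x) M_x(g(y)) τ(x,y)`. -/
noncomputable def cpMul {G U : Type} (𝒢 : Gpd G U) (Rf : U → Type) [∀ u, Ring (Rf u)]
    (M : (x : G) → Rf (𝒢.s x) → Rf (𝒢.r x)) (τ : (x y : G) → Rf (𝒢.r x))
    (f g : (x : G) → Rf (𝒢.r x)) : (z : G) → Rf (𝒢.r z) :=
  fun z => ∑ᶠ (q : G × G) (h : 𝒢.s q.1 = 𝒢.r q.2 ∧ 𝒢.mul q.1 q.2 = z),
    tr Rf ((𝒢.r_mul q.1 q.2 h.1).symm.trans (congrArg 𝒢.r h.2))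
      (f q.1 * M q.1 (tr Rf h.1.symm (g q.2)) * τ q.1 q.2)
section Stmt16Aux

variable {G U : Type} (𝒢 : Gpd G U) (Rf : U → Type) [∀ u, Ring (Rf u)]

theorem tr_trans {u v w : U} (h1 : u = v) (h2 : v = w) (a : Rf u) :
    tr Rf h2 (tr Rf h1 a) = tr Rf (h1.trans h2) a := by subst h1; subst h2; rfl

theorem tr_mul' {u v : U} (h : u = v) (a b : Rf u) :
    tr Rf h (a * b) = tr Rf h a * tr Rf h b := by subst h; rfl

theorem tr_add' {u v : U} (h : u = v) (a b : Rf u) :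
    tr Rf h (a + b) = tr Rf h a + tr Rf h b := by subst h; rfl

theorem tr_zero' {u v : U} (h : u = v) : tr Rf h (0 : Rf u) = 0 := by subst h; rfl

theorem tr_sum' {ι : Type} {u v : U} (h : u = v) (s : Finset ι) (k : ι → Rf u) :
    tr Rf h (∑ i ∈ s, k i) = ∑ i ∈ s, tr Rf h (k i) := by subst h; rfl

theorem tr_congr {u v : U} (h1 h2 : u = v) {a b : Rf u} (hab : a = b) :
    tr Rf h1 a = tr Rf h2 b := by subst h1; subst hab; rfl

theorem tr_shuffle {u v w : U} (h1 : u = v) (h2 : v = w) (a : Rf u) (b : Rf v) :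
    tr Rf h2 (tr Rf h1 a * b) = tr Rf (h1.trans h2) (a * tr Rf h1.symm b) := by
  subst h1; subst h2; rfl

variable (F : RingFS 𝒢 Rf)

theorem M_zero (x : G) : F.M x 0 = 0 := by
  have h := F.M_add x 0 0
  rw [add_zero] at h
  have h2 : F.M x 0 + F.M x 0 = F.M x 0 + 0 := by rw [add_zero]; exact h.symm
  exact add_left_cancel h2

theorem M_sum {ι : Type} (x : G) (s : Finset ι) (k : ι → Rf (𝒢.s x)) :
    F.M x (∑ i ∈ s, k i) = ∑ i ∈ s, F.M x (k i) :=
  map_sum (AddMonoidHom.mk' (F.M x) (F.M_add x)) k s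

end Stmt16Aux
open scoped Classical

/-- single summand of the crossed product. -/
noncomputable def term {G U : Type} (𝒢 : Gpd G U) (Rf : U → Type) [∀ u, Ring (Rf u)]
    (F : RingFS 𝒢 Rf) (f g : (x : G) → Rf (𝒢.r x)) (z : G) (q : G × G) : Rf (𝒢.r z) :=
  if h : 𝒢.s q.1 = 𝒢.r q.2 ∧ 𝒢.mul q.1 q.2 = z then
    tr Rf ((𝒢.r_mul q.1 q.2 h.1).symm.trans (congrArg 𝒢.r h.2))
      (f q.1 * F.M q.1 (tr Rf h.1.symm (g q.2)) * F.τ q.1 q.2)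
  else 0

theorem finsum_dite' {M : Type} [AddCommMonoid M] {P : Prop} [Decidable P] (v : P → M) :
    (∑ᶠ h : P, v h) = if h : P then v h else 0 := by
  by_cases h : P
  · haveI := uniqueProp h
    rw [finsum_unique, dif_pos h]
  · haveI : IsEmpty P := ⟨h⟩
    rw [finsum_of_isEmpty, dif_neg h]

section Stmt16Aux2

variable {G U : Type} (𝒢 : Gpd G U) (Rf : U → Type) [∀ u, Ring (Rf u)] (F : RingFS 𝒢 Rf)

theorem cpMul_eq (f g : (x : G) → Rf (𝒢.r x)) (z : G) :
    cpMul 𝒢 Rf F.M F.τ f g z = ∑ᶠ q : G × G, term 𝒢 Rf F f g z q := by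
  simp only [cpMul, term]
  exact finsum_congr fun _ => finsum_dite' _

theorem term_zero {f g : (x : G) → Rf (𝒢.r x)} {z : G} {q : G × G}
    (hc : ¬(𝒢.s q.1 = 𝒢.r q.2 ∧ 𝒢.mul q.1 q.2 = z)) : term 𝒢 Rf F f g z q = 0 := by
  rw [term, dif_neg hc]

theorem term_zero_left {f g : (x : G) → Rf (𝒢.r x)} {z : G} {q : G × G}
    (h0 : f q.1 = 0) : term 𝒢 Rf F f g z q = 0 := by
  by_cases hc : 𝒢.s q.1 = 𝒢.r q.2 ∧ 𝒢.mul q.1 q.2 = z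
  · rw [term, dif_pos hc, h0, zero_mul, zero_mul, tr_zero']
  · exact term_zero 𝒢 Rf F hc

theorem term_zero_right {f g : (x : G) → Rf (𝒢.r x)} {z : G} {q : G × G}
    (h0 : g q.2 = 0) : term 𝒢 Rf F f g z q = 0 := by
  by_cases hc : 𝒢.s q.1 = 𝒢.r q.2 ∧ 𝒢.mul q.1 q.2 = z
  · rw [term, dif_pos hc, h0, tr_zero', M_zero, mul_zero, zero_mul, tr_zero']
  · exact term_zero 𝒢 Rf F hc

theorem term_support (f g : (x : G) → Rf (𝒢.r x)) (z : G) :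
    Function.support (term 𝒢 Rf F f g z) ⊆ {x | f x ≠ 0} ×ˢ {x | g x ≠ 0} := by
  intro q hq
  refine ⟨fun h0 => hq ?_, fun h0 => hq ?_⟩
  · exact term_zero_left 𝒢 Rf F h0
  · exact term_zero_right 𝒢 Rf F h0

theorem cpMul_eq_sum (f g : (x : G) → Rf (𝒢.r x)) (s t : Finset G)
    (hs : ∀ x, f x ≠ 0 → x ∈ s) (ht : ∀ x, g x ≠ 0 → x ∈ t) (z : G) :
    cpMul 𝒢 Rf F.M F.τ f g z = ∑ q ∈ s ×ˢ t, term 𝒢 Rf F f g z q := by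
  rw [cpMul_eq]
  apply finsum_eq_finset_sum_of_support_subset
  intro q hq
  have h2 := term_support 𝒢 Rf F f g z hq
  exact Finset.mem_coe.mpr (Finset.mem_product.mpr ⟨hs _ h2.1, ht _ h2.2⟩)

theorem cpMul_support (f g : (x : G) → Rf (𝒢.r x)) (s t : Finset G)
    (hs : ∀ x, f x ≠ 0 → x ∈ s) (ht : ∀ x, g x ≠ 0 → x ∈ t) :
    ∀ z, cpMul 𝒢 Rf F.M F.τ f g z ≠ 0 →
      z ∈ (s ×ˢ t).image (fun q : G × G => 𝒢.mul q.1 q.2) := by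
  intro z hz
  by_contra hmem
  apply hz
  rw [cpMul_eq_sum 𝒢 Rf F f g s t hs ht]
  apply Finset.sum_eq_zero
  intro q hq
  by_cases hc : 𝒢.s q.1 = 𝒢.r q.2 ∧ 𝒢.mul q.1 q.2 = z
  · exact absurd (Finset.mem_image.mpr ⟨q, hq, hc.2⟩) hmem
  · exact term_zero 𝒢 Rf F hc

end Stmt16Aux2

section Stmt16Aux3

variable {G U : Type} (𝒢 : Gpd G U) (Rf : U → Type) [∀ u, Ring (Rf u)] (F : RingFS 𝒢 Rf)

theorem term_add_left (f g h : (x : G) → Rf (𝒢.r x)) (z : G) (q : G × G) :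
    term 𝒢 Rf F (fun x => f x + g x) h z q =
      term 𝒢 Rf F f h z q + term 𝒢 Rf F g h z q := by
  by_cases hc : 𝒢.s q.1 = 𝒢.r q.2 ∧ 𝒢.mul q.1 q.2 = z
  · simp only [term]
    rw [dif_pos hc, dif_pos hc, dif_pos hc, add_mul, add_mul, tr_add']
  · rw [term_zero 𝒢 Rf F hc, term_zero 𝒢 Rf F hc, term_zero 𝒢 Rf F hc, add_zero]

theorem term_add_right (f g h : (x : G) → Rf (𝒢.r x)) (z : G) (q : G × G) :
    term 𝒢 Rf F f (fun x => g x + h x) z q =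
      term 𝒢 Rf F f g z q + term 𝒢 Rf F f h z q := by
  by_cases hc : 𝒢.s q.1 = 𝒢.r q.2 ∧ 𝒢.mul q.1 q.2 = z
  · simp only [term]
    rw [dif_pos hc, dif_pos hc, dif_pos hc, tr_add', F.M_add, mul_add, add_mul, tr_add']
  · rw [term_zero 𝒢 Rf F hc, term_zero 𝒢 Rf F hc, term_zero 𝒢 Rf F hc, add_zero]

open scoped Classical in
/-- Left-iterated product summand. -/
noncomputable def Lt (f g h : (x : G) → Rf (𝒢.r x)) (z : G) (q p : G × G) : Rf (𝒢.r z) :=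
  if hq : 𝒢.s q.1 = 𝒢.r q.2 ∧ 𝒢.mul q.1 q.2 = z then
    tr Rf ((𝒢.r_mul q.1 q.2 hq.1).symm.trans (congrArg 𝒢.r hq.2))
      (term 𝒢 Rf F f g q.1 p * F.M q.1 (tr Rf hq.1.symm (h q.2)) * F.τ q.1 q.2)
  else 0

open scoped Classical in
/-- Right-iterated product summand. -/
noncomputable def Rt (f g h : (x : G) → Rf (𝒢.r x)) (z : G) (q p : G × G) : Rf (𝒢.r z) :=
  if hq : 𝒢.s q.1 = 𝒢.r q.2 ∧ 𝒢.mul q.1 q.2 = z then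
    tr Rf ((𝒢.r_mul q.1 q.2 hq.1).symm.trans (congrArg 𝒢.r hq.2))
      (f q.1 * F.M q.1 (tr Rf hq.1.symm (term 𝒢 Rf F g h q.2 p)) * F.τ q.1 q.2)
  else 0

theorem Lt_zero_of_term {f g h : (x : G) → Rf (𝒢.r x)} {z : G} {q p : G × G}
    (h0 : term 𝒢 Rf F f g q.1 p = 0) : Lt 𝒢 Rf F f g h z q p = 0 := by
  by_cases hq : 𝒢.s q.1 = 𝒢.r q.2 ∧ 𝒢.mul q.1 q.2 = z
  · rw [Lt, dif_pos hq, h0, zero_mul, zero_mul, tr_zero']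
  · rw [Lt, dif_neg hq]

theorem Rt_zero_of_term {f g h : (x : G) → Rf (𝒢.r x)} {z : G} {q p : G × G}
    (h0 : term 𝒢 Rf F g h q.2 p = 0) : Rt 𝒢 Rf F f g h z q p = 0 := by
  by_cases hq : 𝒢.s q.1 = 𝒢.r q.2 ∧ 𝒢.mul q.1 q.2 = z
  · rw [Rt, dif_pos hq, h0, tr_zero', M_zero, mul_zero, zero_mul, tr_zero']
  · rw [Rt, dif_neg hq]

theorem expand_L (f g h : (x : G) → Rf (𝒢.r x)) (s t : Finset G)
    (hs : ∀ x, f x ≠ 0 → x ∈ s) (ht : ∀ x, g x ≠ 0 → x ∈ t) (z : G) (q : G × G) :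
    term 𝒢 Rf F (cpMul 𝒢 Rf F.M F.τ f g) h z q =
      ∑ p ∈ s ×ˢ t, Lt 𝒢 Rf F f g h z q p := by
  by_cases hq : 𝒢.s q.1 = 𝒢.r q.2 ∧ 𝒢.mul q.1 q.2 = z
  · rw [term, dif_pos hq, cpMul_eq_sum 𝒢 Rf F f g s t hs ht q.1,
      Finset.sum_mul, Finset.sum_mul, tr_sum']
    exact Finset.sum_congr rfl fun p _ => by rw [Lt, dif_pos hq]
  · rw [term_zero 𝒢 Rf F hq]
    exact (Finset.sum_eq_zero fun p _ => by rw [Lt, dif_neg hq]).symm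

theorem expand_R (f g h : (x : G) → Rf (𝒢.r x)) (s t : Finset G)
    (hs : ∀ x, g x ≠ 0 → x ∈ s) (ht : ∀ x, h x ≠ 0 → x ∈ t) (z : G) (q : G × G) :
    term 𝒢 Rf F f (cpMul 𝒢 Rf F.M F.τ g h) z q =
      ∑ p ∈ s ×ˢ t, Rt 𝒢 Rf F f g h z q p := by
  by_cases hq : 𝒢.s q.1 = 𝒢.r q.2 ∧ 𝒢.mul q.1 q.2 = z
  · rw [term, dif_pos hq, cpMul_eq_sum 𝒢 Rf F g h s t hs ht q.2,
      tr_sum', M_sum 𝒢 Rf F, Finset.mul_sum, Finset.sum_mul, tr_sum']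
    exact Finset.sum_congr rfl fun p _ => by rw [Rt, dif_pos hq]
  · rw [term_zero 𝒢 Rf F hq]
    exact (Finset.sum_eq_zero fun p _ => by rw [Rt, dif_neg hq]).symm

theorem core (f g h : (x : G) → Rf (𝒢.r x)) (x y w z : G)
    (hxy : 𝒢.s x = 𝒢.r y) (hyw : 𝒢.s y = 𝒢.r w) :
    Lt 𝒢 Rf F f g h z (𝒢.mul x y, w) (x, y) =
      Rt 𝒢 Rf F f g h z (x, 𝒢.mul y w) (y, w) := by
  have hsm : 𝒢.s (𝒢.mul x y) = 𝒢.r w := (𝒢.s_mul x y hxy).trans hyw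
  have hrn : 𝒢.s x = 𝒢.r (𝒢.mul y w) := hxy.trans (𝒢.r_mul y w hyw).symm
  have hassoc : 𝒢.mul (𝒢.mul x y) w = 𝒢.mul x (𝒢.mul y w) := 𝒢.assoc x y w hxy hyw
  by_cases hz : 𝒢.mul (𝒢.mul x y) w = z
  · subst hz
    simp only [Lt, Rt, term]
    rw [dif_pos (show 𝒢.s (𝒢.mul x y) = 𝒢.r w ∧ True from ⟨hsm, trivial⟩),
        dif_pos (show 𝒢.s x = 𝒢.r (𝒢.mul y w) ∧ 𝒢.mul x (𝒢.mul y w) = 𝒢.mul (𝒢.mul x y) w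
          from ⟨hrn, hassoc.symm⟩),
        dif_pos (show 𝒢.s x = 𝒢.r y ∧ True from ⟨hxy, trivial⟩),
        dif_pos (show 𝒢.s y = 𝒢.r w ∧ True from ⟨hyw, trivial⟩)]
    rw [mul_assoc]
    rw [tr_shuffle]
    refine tr_congr Rf _ _ ?_
    conv_rhs => rw [tr_trans, tr_mul', tr_mul', F.M_mul, F.M_mul]
    rw [F.C1 x y hxy (tr Rf hyw.symm (h w))]
    simp only [mul_assoc]
    rw [← F.C2 x y w hxy hyw]
    have hcanc : ∀ t : Rf (𝒢.r x), F.τinv x y * (F.τ x y * t) = t := fun t => by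
      rw [← mul_assoc, F.τinv_mul_τ x y hxy, one_mul]
    rw [hcanc]
    conv_lhs => rw [tr_mul']
    rw [tr_trans Rf hyw.symm (𝒢.s_mul x y hxy).symm (h w)]
  · have h1 : ¬(𝒢.s (𝒢.mul x y) = 𝒢.r w ∧ 𝒢.mul (𝒢.mul x y) w = z) := fun hc => hz hc.2
    have h2 : ¬(𝒢.s x = 𝒢.r (𝒢.mul y w) ∧ 𝒢.mul x (𝒢.mul y w) = z) :=
      fun hc => hz (hassoc.trans hc.2)
    simp only [Lt, Rt]
    rw [dif_neg h1, dif_neg h2]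


theorem key (f g h : (x : G) → Rf (𝒢.r x)) (A B C : Finset G)
    (x y w z : G) (hx : x ∈ A) (hy : y ∈ B) (hw : w ∈ C) :
    ∑ d ∈ (A ×ˢ B).image (fun q : G × G => 𝒢.mul q.1 q.2), Lt 𝒢 Rf F f g h z (d, w) (x, y) =
      ∑ e ∈ (B ×ˢ C).image (fun q : G × G => 𝒢.mul q.1 q.2),
        Rt 𝒢 Rf F f g h z (x, e) (y, w) := by
  by_cases hxy : 𝒢.s x = 𝒢.r y
  · by_cases hyw : 𝒢.s y = 𝒢.r w
    · rw [Finset.sum_eq_single_of_mem (𝒢.mul x y)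
        (Finset.mem_image.mpr ⟨(x, y), Finset.mem_product.mpr ⟨hx, hy⟩, rfl⟩)
        (fun d _ hd => Lt_zero_of_term 𝒢 Rf F (term_zero 𝒢 Rf F fun hc => hd hc.2.symm)),
        Finset.sum_eq_single_of_mem (𝒢.mul y w)
        (Finset.mem_image.mpr ⟨(y, w), Finset.mem_product.mpr ⟨hy, hw⟩, rfl⟩)
        (fun e _ he => Rt_zero_of_term 𝒢 Rf F (term_zero 𝒢 Rf F fun hc => he hc.2.symm))]
      exact core 𝒢 Rf F f g h x y w z hxy hyw
    · trans (0 : Rf (𝒢.r z))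
      · apply Finset.sum_eq_zero; intro d _
        by_cases hd : 𝒢.s x = 𝒢.r y ∧ 𝒢.mul x y = d
        · have hnq : ¬(𝒢.s d = 𝒢.r w ∧ 𝒢.mul d w = z) := by
            rintro ⟨h1, -⟩
            exact hyw (((𝒢.s_mul x y hd.1).symm.trans (congrArg 𝒢.s hd.2)).trans h1)
          rw [Lt, dif_neg hnq]
        · exact Lt_zero_of_term 𝒢 Rf F (term_zero 𝒢 Rf F hd)
      · symm; apply Finset.sum_eq_zero; intro e _
        exact Rt_zero_of_term 𝒢 Rf F (term_zero 𝒢 Rf F fun hc => hyw hc.1)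
  · trans (0 : Rf (𝒢.r z))
    · apply Finset.sum_eq_zero; intro d _
      exact Lt_zero_of_term 𝒢 Rf F (term_zero 𝒢 Rf F fun hc => hxy hc.1)
    · symm; apply Finset.sum_eq_zero; intro e _
      by_cases he : 𝒢.s y = 𝒢.r w ∧ 𝒢.mul y w = e
      · have hnq : ¬(𝒢.s x = 𝒢.r e ∧ 𝒢.mul x e = z) := by
          rintro ⟨h1, -⟩
          exact hxy (h1.trans (((congrArg 𝒢.r he.2).symm.trans (𝒢.r_mul y w he.1))))
        rw [Rt, dif_neg hnq]
      · exact Rt_zero_of_term 𝒢 Rf F (term_zero 𝒢 Rf F he)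

end Stmt16Aux3

/-- For a factor system `(M,τ)` for `(𝒢,ℛ)`, the set `ℛ ×_(M,τ) 𝒢` of
finitely supported sections `f : 𝒢 → ℛ` with `p ∘ f = r`, with pointwise addition and the
product `(fg)(z) = ∑_{xy=z} f(x) M_x(g(y)) τ(x,y)`, is an associative ring: products of
finitely supported sections are finitely supported, and the product is associative and
bi-additive. -/
theorem stmt16 {G U : Type} (𝒢 : Gpd G U) (Rf : U → Type) [∀ u, Ring (Rf u)]
    (F : RingFS 𝒢 Rf)
    (f g h : (x : G) → Rf (𝒢.r x))
    (hf : {x | f x ≠ 0}.Finite) (hg : {x | g x ≠ 0}.Finite) (hh : {x | h x ≠ 0}.Finite) :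
    -- closure under the product
    {z | cpMul 𝒢 Rf F.M F.τ f g z ≠ 0}.Finite ∧
    -- associativity
    cpMul 𝒢 Rf F.M F.τ (cpMul 𝒢 Rf F.M F.τ f g) h =
      cpMul 𝒢 Rf F.M F.τ f (cpMul 𝒢 Rf F.M F.τ g h) ∧
    -- distributivity
    cpMul 𝒢 Rf F.M F.τ (fun x => f x + g x) h =
      (fun z => cpMul 𝒢 Rf F.M F.τ f h z + cpMul 𝒢 Rf F.M F.τ g h z) ∧
    cpMul 𝒢 Rf F.M F.τ f (fun x => g x + h x) =
      (fun z => cpMul 𝒢 Rf F.M F.τ f g z + cpMul 𝒢 Rf F.M F.τ f h z) := by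
  have hA : ∀ a, f a ≠ 0 → a ∈ hf.toFinset := fun a ha => hf.mem_toFinset.mpr ha
  have hB : ∀ a, g a ≠ 0 → a ∈ hg.toFinset := fun a ha => hg.mem_toFinset.mpr ha
  have hC : ∀ a, h a ≠ 0 → a ∈ hh.toFinset := fun a ha => hh.mem_toFinset.mpr ha
  refine ⟨?_, ?_, ?_, ?_⟩
  · -- closure
    apply Set.Finite.subset
      (Finset.finite_toSet ((hf.toFinset ×ˢ hg.toFinset).image fun q : G × G => 𝒢.mul q.1 q.2))
    intro z hz
    exact Finset.mem_coe.mpr (cpMul_support 𝒢 Rf F f g _ _ hA hB z hz)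
  · -- associativity
    funext z
    set A := hf.toFinset with hAdef
    set B := hg.toFinset with hBdef
    set C := hh.toFinset with hCdef
    set D := (A ×ˢ B).image (fun q : G × G => 𝒢.mul q.1 q.2) with hDdef
    set E := (B ×ˢ C).image (fun q : G × G => 𝒢.mul q.1 q.2) with hEdef
    have hD : ∀ a, cpMul 𝒢 Rf F.M F.τ f g a ≠ 0 → a ∈ D :=
      fun a ha => cpMul_support 𝒢 Rf F f g A B hA hB a ha
    have hE : ∀ a, cpMul 𝒢 Rf F.M F.τ g h a ≠ 0 → a ∈ E :=
      fun a ha => cpMul_support 𝒢 Rf F g h B C hB hC a ha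
    have hL : cpMul 𝒢 Rf F.M F.τ (cpMul 𝒢 Rf F.M F.τ f g) h z =
        ∑ x' ∈ A, ∑ y' ∈ B, ∑ w' ∈ C, ∑ d ∈ D, Lt 𝒢 Rf F f g h z (d, w') (x', y') := by
      rw [cpMul_eq_sum 𝒢 Rf F _ h D C hD hC z]
      calc ∑ q ∈ D ×ˢ C, term 𝒢 Rf F (cpMul 𝒢 Rf F.M F.τ f g) h z q
          = ∑ q ∈ D ×ˢ C, ∑ p ∈ A ×ˢ B, Lt 𝒢 Rf F f g h z q p :=
            Finset.sum_congr rfl fun q _ => expand_L 𝒢 Rf F f g h A B hA hB z q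
        _ = ∑ p ∈ A ×ˢ B, ∑ q ∈ D ×ˢ C, Lt 𝒢 Rf F f g h z q p := Finset.sum_comm
        _ = _ := by
            simp only [Finset.sum_product]
            exact Finset.sum_congr rfl fun x' _ => Finset.sum_congr rfl fun y' _ =>
              Finset.sum_comm
    have hR : cpMul 𝒢 Rf F.M F.τ f (cpMul 𝒢 Rf F.M F.τ g h) z =
        ∑ x' ∈ A, ∑ y' ∈ B, ∑ w' ∈ C, ∑ e ∈ E, Rt 𝒢 Rf F f g h z (x', e) (y', w') := by
      rw [cpMul_eq_sum 𝒢 Rf F f _ A E hA hE z]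
      calc ∑ q ∈ A ×ˢ E, term 𝒢 Rf F f (cpMul 𝒢 Rf F.M F.τ g h) z q
          = ∑ q ∈ A ×ˢ E, ∑ p ∈ B ×ˢ C, Rt 𝒢 Rf F f g h z q p :=
            Finset.sum_congr rfl fun q _ => expand_R 𝒢 Rf F f g h B C hB hC z q
        _ = _ := by
            simp only [Finset.sum_product]
            refine Finset.sum_congr rfl fun x' _ => ?_
            rw [Finset.sum_comm]
            exact Finset.sum_congr rfl fun y' _ => Finset.sum_comm
    rw [hL, hR]
    refine Finset.sum_congr rfl fun x' hx' => Finset.sum_congr rfl fun y' hy' =>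
      Finset.sum_congr rfl fun w' hw' => ?_
    exact key 𝒢 Rf F f g h A B C x' y' w' z hx' hy' hw'
  · -- left distributivity
    funext z
    rw [cpMul_eq 𝒢 Rf F _ h z, cpMul_eq 𝒢 Rf F f h z, cpMul_eq 𝒢 Rf F g h z,
      ← finsum_add_distrib
        (Set.Finite.subset (hf.prod hh) (term_support 𝒢 Rf F f h z))
        (Set.Finite.subset (hg.prod hh) (term_support 𝒢 Rf F g h z))]
    exact finsum_congr fun q => term_add_left 𝒢 Rf F f g h z q
  · -- right distributivity
    funext z
    rw [cpMul_eq 𝒢 Rf F f _ z, cpMul_eq 𝒢 Rf F f g z, cpMul_eq 𝒢 Rf F f h z,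
      ← finsum_add_distrib
        (Set.Finite.subset (hf.prod hg) (term_support 𝒢 Rf F f g z))
        (Set.Finite.subset (hf.prod hh) (term_support 𝒢 Rf F f h z))]
    exact finsum_congr fun q => term_add_right 𝒢 Rf F f g h z q
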